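/- Let C be a classical causal structure with a parentless observed node X taking values 1,…,n, and let P be a joint distribution over X, its descendants X↑, and its non-descendants X↑̸, such that X is independent of X↑̸ (i.e., P(X↑, X↑̸, X=x) = P(X↑ | X↑̸, X=x)·P(X↑̸)·P(X=x) with P(X=x) > 0 for all x). Then there exists a joint distribution Q over the n·|X↑| + |X↑̸| variables consisting of n post-selected copies X↑|_{X=1},…,X↑|_{X=n} together with X↑̸, such that for every x, the marginal of Q on (X↑|_{X=x}, X↑̸) equals P(X↑, X↑̸ | X=x). -/

import Mathlib

open Finset

/-- Probability that the random variable `X` takes value `x`, for weights `μ`. -/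
noncomputable def prob {Ω α : Type} [Fintype Ω] [Fintype α] [DecidableEq α]
    (μ : Ω → ℝ) (X : Ω → α) (x : α) : ℝ :=
  ∑ ω, if X ω = x then μ ω else 0

/-- Shannon entropy (base 2) of a finite discrete random variable,
with the convention `0 * log₂ 0 = 0` (since `Real.logb 2 0 = 0`). -/
noncomputable def ent {Ω α : Type} [Fintype Ω] [Fintype α] [DecidableEq α]
    (μ : Ω → ℝ) (X : Ω → α) : ℝ :=
  -∑ x, prob μ X x * Real.logb 2 (prob μ X x)

/-- `μ` is a probability mass function on the finite sample space `Ω`. -/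
def IsPMF {Ω : Type} [Fintype Ω] (μ : Ω → ℝ) : Prop :=
  (∀ ω, 0 ≤ μ ω) ∧ ∑ ω, μ ω = 1

/-- Mutual information `I(X:Y) = H(X) + H(Y) - H(X,Y)`. -/
noncomputable def mutualInfo {Ω α β : Type} [Fintype Ω] [Fintype α] [Fintype β]
    [DecidableEq α] [DecidableEq β] (μ : Ω → ℝ) (X : Ω → α) (Y : Ω → β) : ℝ :=
  ent μ X + ent μ Y - ent μ (fun ω => (X ω, Y ω))

/-- Conditional mutual information
`I(X:Y|Z) = H(X,Z) + H(Y,Z) - H(Z) - H(X,Y,Z)`. -/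
noncomputable def condMutualInfo {Ω α β γ : Type} [Fintype Ω] [Fintype α] [Fintype β]
    [Fintype γ] [DecidableEq α] [DecidableEq β] [DecidableEq γ]
    (μ : Ω → ℝ) (X : Ω → α) (Y : Ω → β) (Z : Ω → γ) : ℝ :=
  ent μ (fun ω => (X ω, Z ω)) + ent μ (fun ω => (Y ω, Z ω)) - ent μ Z
    - ent μ (fun ω => (X ω, Y ω, Z ω))

/-- Conditional entropy `H(X|Y) = H(X,Y) - H(Y)`. -/
noncomputable def condEnt {Ω α β : Type} [Fintype Ω] [Fintype α] [Fintype β]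
    [DecidableEq α] [DecidableEq β] (μ : Ω → ℝ) (X : Ω → α) (Y : Ω → β) : ℝ :=
  ent μ (fun ω => (X ω, Y ω)) - ent μ Y


/-- Generalisation of (part of) Fine's theorem: given a joint distribution
p over (X, X↑, X↑̸) — with X parentless, taking values in Fin n with positive
probabilities, and independent of its non-descendants X↑̸ — there is a joint
distribution Q of the n post-selected copies X↑|_{X=x} together with X↑̸ whose
marginal on (X↑|_{X=x}, X↑̸) is P(X↑, X↑̸ | X = x) for every x. -/
theorem fine_gluing {n : ℕ} {S T : Type} [Fintype S] [Fintype T] [DecidableEq S]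
    (p : Fin n → S → T → ℝ)
    (hp0 : ∀ x s t, 0 ≤ p x s t)
    (hp1 : ∑ x, ∑ s, ∑ t, p x s t = 1)
    (pX : Fin n → ℝ) (hpX : ∀ x, pX x = ∑ s, ∑ t, p x s t)
    (hpXpos : ∀ x, 0 < pX x)
    (hindep : ∀ x t, ∑ s, p x s t = pX x * (∑ x', ∑ s, p x' s t)) :
    ∃ Q : (Fin n → S) → T → ℝ,
      (∀ f t, 0 ≤ Q f t) ∧ (∑ f, ∑ t, Q f t = 1) ∧
      ∀ (x : Fin n) (s : S) (t : T),
        (∑ f ∈ Finset.univ.filter (fun f : Fin n → S => f x = s), Q f t) * pX x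
          = p x s t := by
  set pT : T → ℝ := fun t => ∑ x, ∑ s, p x s t with hpT
  have hpT0 : ∀ t, 0 ≤ pT t := fun t =>
    Finset.sum_nonneg fun x _ => Finset.sum_nonneg fun s _ => hp0 x s t
  have hple : ∀ x s t, p x s t ≤ pT t := by
    intro x s t
    calc p x s t ≤ ∑ s, p x s t := Finset.single_le_sum (fun s _ => hp0 x s t) (mem_univ s)
      _ ≤ pT t := Finset.single_le_sum
          (fun x _ => Finset.sum_nonneg fun s _ => hp0 x s t) (mem_univ x)
  -- conditional r x s t = p x s t / (pX x * pT t)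
  set r : Fin n → S → T → ℝ := fun x s t => p x s t / (pX x * pT t) with hr
  have hrsum : ∀ x t, pT t ≠ 0 → ∑ s, r x s t = 1 := by
    intro x t ht
    rw [hr]
    simp only [← Finset.sum_div]
    rw [hindep x t]
    exact div_self (mul_ne_zero (hpXpos x).ne' ht)
  refine ⟨fun f t => if pT t = 0 then 0 else pT t * ∏ x, r x (f x) t, ?_, ?_, ?_⟩
  · intro f t
    by_cases ht : pT t = 0
    · simp [ht]
    · simp only [ht, if_false]
      exact mul_nonneg (hpT0 t) (Finset.prod_nonneg fun x _ =>
        div_nonneg (hp0 x (f x) t) (mul_nonneg (hpXpos x).le (hpT0 t)))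
  · rw [Finset.sum_comm]
    have : ∀ t : T, (∑ f : Fin n → S, if pT t = 0 then 0 else pT t * ∏ x, r x (f x) t) = pT t := by
      intro t
      by_cases ht : pT t = 0
      · simp [ht]
      · simp only [ht, if_false, ← Finset.mul_sum]
        rw [← Fintype.prod_sum (fun x s => r x s t)]
        rw [Finset.prod_congr rfl fun x _ => hrsum x t ht]
        simp
    rw [Finset.sum_congr rfl fun t _ => this t, hpT]
    rw [Finset.sum_comm]
    rw [show (∑ x, ∑ t : T, ∑ s, p x s t) = ∑ x, ∑ s, ∑ t, p x s t from
      Finset.sum_congr rfl fun x _ => Finset.sum_comm]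
    exact hp1
  · intro x s t
    by_cases ht : pT t = 0
    · have hp0' : p x s t = 0 := le_antisymm (ht ▸ hple x s t) (hp0 x s t)
      simp [ht, hp0']
    · simp only [ht, if_false, Finset.sum_filter, ← Finset.mul_sum]
      have key : (∑ f : Fin n → S, if f x = s then ∏ x', r x' (f x') t else 0)
          = r x s t := by
        have hg : ∀ f : Fin n → S, (if f x = s then ∏ x', r x' (f x') t else 0)
            = ∏ x', (if x' = x then (if f x' = s then r x' (f x') t else 0)
                     else r x' (f x') t) := by
          intro f
          by_cases hfx : f x = s
          · simp only [hfx, if_true]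
            refine Finset.prod_congr rfl fun x' _ => ?_
            by_cases h : x' = x <;> simp [h, hfx]
          · rw [if_neg hfx]
            refine (Finset.prod_eq_zero (mem_univ x) ?_).symm
            simp [hfx]
        rw [Finset.sum_congr rfl fun f _ => hg f]
        rw [← Fintype.prod_sum (fun x' u => if x' = x then (if u = s then r x' u t else 0)
          else r x' u t)]
        have : ∀ x' : Fin n, (∑ u : S, if x' = x then (if u = s then r x' u t else 0)
            else r x' u t) = if x' = x then r x s t else 1 := by
          intro x'
          by_cases h : x' = x
          · simp [h, Finset.sum_ite_eq' Finset.univ s (fun u => r x u t)]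
          · simp [h, hrsum x' t ht]
        rw [Finset.prod_congr rfl fun x' _ => this x']
        simp
      rw [key, hr]
      have hx := (hpXpos x).ne'
      field_simp
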